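/- Let cl be a maximal exceptional sequence in Z^r, fix ν, and let B be a segment (maximal run of consecutive integers with nonempty layers). Then the alternating sum Σ_{c∈B} (−1)^c ℓ_c equals 0, where ℓ_c = |L_c|. -/

import Mathlib

def IsExceptional {r m : ℕ} (cl : Fin m → (Fin r → ℤ)) : Prop :=
  ∀ i j : Fin m, i < j → ∃ ν : Fin r, cl j ν - cl i ν = 1

def layerCard {r m : ℕ} (cl : Fin m → (Fin r → ℤ)) (ν : Fin r) (c : ℤ) : ℕ :=
  (Finset.univ.filter fun i => cl i ν = c).card

open Finset

lemma key_lemma {m r : ℕ} (f : Fin m → Fin r → ℤ) (t : Finset (Fin r)) :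
    ∀ s : Finset (Fin m),
      (∀ i ∈ s, ∀ j ∈ s, i < j → ∃ μ ∈ t, f j μ - f i μ = 1) → s.card ≤ 2 ^ t.card := by
  classical
  induction t using Finset.induction_on with
  | empty =>
      intro s hs
      by_contra hc
      push_neg at hc
      simp only [card_empty, pow_zero] at hc
      obtain ⟨a, ha, b, hb, hab⟩ := Finset.one_lt_card.mp hc
      rcases lt_or_gt_of_ne hab with hlt | hlt
      · obtain ⟨μ, hμ, -⟩ := hs a ha b hb hlt
        exact absurd hμ (Finset.notMem_empty μ)
      · obtain ⟨μ, hμ, -⟩ := hs b hb a ha hlt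
        exact absurd hμ (Finset.notMem_empty μ)
  | @insert a t' hat ih =>
      intro s hs
      have hgen : ∀ s' ⊆ s, (∀ i ∈ s', ∀ j ∈ s', Even (f i a) ↔ Even (f j a)) →
          s'.card ≤ 2 ^ t'.card := by
        intro s' hsub hpar
        apply ih
        intro i hi j hj hij
        obtain ⟨μ, hμ, hd⟩ := hs i (hsub hi) j (hsub hj) hij
        rcases Finset.mem_insert.mp hμ with rfl | hμ'
        · exfalso
          have hpar' := hpar i hi j hj
          rcases Int.even_or_odd (f i μ) with he | ho
          · have : Even (f j μ - f i μ) := (hpar'.mp he).sub he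
            rw [hd] at this
            norm_num at this
          · have hoj : Odd (f j μ) := by
              rcases Int.even_or_odd (f j μ) with he' | ho'
              · exact absurd (hpar'.mpr he') (Int.not_even_iff_odd.mpr ho)
              · exact ho'
            have : Even (f j μ - f i μ) := hoj.sub_odd ho
            rw [hd] at this
            norm_num at this
        · exact ⟨μ, hμ', hd⟩
      have h1 : (s.filter fun i => Even (f i a)).card ≤ 2 ^ t'.card := by
        apply hgen _ (filter_subset _ _)
        intro i hi j hj
        simp only [mem_filter] at hi hj
        simp [hi.2, hj.2]
      have h2 : (s.filter fun i => ¬ Even (f i a)).card ≤ 2 ^ t'.card := by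
        apply hgen _ (filter_subset _ _)
        intro i hi j hj
        simp only [mem_filter] at hi hj
        simp [hi.2, hj.2]
      have hpart := Finset.card_filter_add_card_filter_not
        (s := s) (p := fun i => Even (f i a))
      have hcard : (insert a t').card = t'.card + 1 := Finset.card_insert_of_notMem hat
      rw [hcard, pow_succ]
      omega

theorem stmt_11 {r : ℕ} (cl : Fin (2 ^ r) → (Fin r → ℤ)) (h : IsExceptional cl)
    (ν : Fin r) (lo hi : ℤ) (hle : lo ≤ hi)
    (hseg : ∀ c : ℤ, lo ≤ c → c ≤ hi → layerCard cl ν c ≠ 0)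
    (hlo : layerCard cl ν (lo - 1) = 0) (hhi : layerCard cl ν (hi + 1) = 0) :
    (∑ c ∈ Finset.Icc lo hi,
      (if Even c then (layerCard cl ν c : ℤ) else -(layerCard cl ν c : ℤ))) = 0 := by
  classical
  set g : Fin (2 ^ r) → ℤ := fun i => cl i ν with hg
  have hlo' : ∀ i, g i ≠ lo - 1 := by
    intro i hi
    have h0 : (Finset.univ.filter fun j => cl j ν = lo - 1) = ∅ :=
      Finset.card_eq_zero.mp hlo
    have : i ∈ (Finset.univ.filter fun j => cl j ν = lo - 1) := by
      simp only [mem_filter, mem_univ, true_and]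
      exact hi
    rw [h0] at this
    exact absurd this (Finset.notMem_empty i)
  have hhi' : ∀ i, g i ≠ hi + 1 := by
    intro i hvi
    have h0 : (Finset.univ.filter fun j => cl j ν = hi + 1) = ∅ :=
      Finset.card_eq_zero.mp hhi
    have : i ∈ (Finset.univ.filter fun j => cl j ν = hi + 1) := by
      simp only [mem_filter, mem_univ, true_and]
      exact hvi
    rw [h0] at this
    exact absurd this (Finset.notMem_empty i)
  -- the four atomic sets
  set P : Fin (2 ^ r) → Prop := fun i => lo ≤ g i ∧ g i ≤ hi with hP
  set s1 : Finset (Fin (2 ^ r)) := Finset.univ.filter (fun i => P i ∧ Even (g i)) with hs1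
  set s2 : Finset (Fin (2 ^ r)) := Finset.univ.filter (fun i => P i ∧ ¬ Even (g i)) with hs2
  set s3 : Finset (Fin (2 ^ r)) := Finset.univ.filter (fun i => ¬ P i ∧ Even (g i)) with hs3
  set s4 : Finset (Fin (2 ^ r)) := Finset.univ.filter (fun i => ¬ P i ∧ ¬ Even (g i)) with hs4
  have hrpos : 0 < r := ν.pos
  have htcard : (Finset.univ.erase ν).card = r - 1 := by
    rw [Finset.card_erase_of_mem (mem_univ ν), Finset.card_univ, Fintype.card_fin]
  -- generic application of key lemma
  have hkey : ∀ s : Finset (Fin (2 ^ r)),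
      (∀ i ∈ s, ∀ j ∈ s, g j - g i ≠ 1) → s.card ≤ 2 ^ (r - 1) := by
    intro s hnd
    have := key_lemma cl (Finset.univ.erase ν) s ?_
    · rwa [htcard] at this
    · intro i hi j hj hij
      obtain ⟨μ, hd⟩ := h i j hij
      refine ⟨μ, Finset.mem_erase.mpr ⟨?_, mem_univ μ⟩, hd⟩
      rintro rfl
      exact hnd i hi j hj hd
  -- parity/gap facts as %2 statements for omega
  have hnd_of : ∀ (Q : Fin (2 ^ r) → Prop) (_ : ∀ i, Q i →
      ((lo ≤ g i ∧ g i ≤ hi) ∧ g i % 2 = 0 ∨ ¬(lo ≤ g i ∧ g i ≤ hi) ∧ g i % 2 = 1) ∨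
      ((lo ≤ g i ∧ g i ≤ hi) ∧ g i % 2 = 1 ∨ ¬(lo ≤ g i ∧ g i ≤ hi) ∧ g i % 2 = 0)),
      True := fun _ _ => trivial
  have hgap : ∀ x y : ℤ, x ≠ lo - 1 → x ≠ hi + 1 → y ≠ lo - 1 → y ≠ hi + 1 →
      ∀ b : Bool,
      ((lo ≤ x ∧ x ≤ hi) ∧ x % 2 = (if b then 0 else 1) ∨
        ¬(lo ≤ x ∧ x ≤ hi) ∧ x % 2 = (if b then 1 else 0)) →
      ((lo ≤ y ∧ y ≤ hi) ∧ y % 2 = (if b then 0 else 1) ∨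
        ¬(lo ≤ y ∧ y ≤ hi) ∧ y % 2 = (if b then 1 else 0)) →
      y - x ≠ 1 := by
    intro x y hx1 hx2 hy1 hy2 b hx hy
    cases b <;> simp only [Bool.false_eq_true, ↓reduceIte] at hx hy <;> omega
  have hmod : ∀ i, Even (g i) ↔ g i % 2 = 0 := fun i => Int.even_iff
  have hmod' : ∀ i, ¬ Even (g i) ↔ g i % 2 = 1 := fun i => Int.not_even_iff
  -- bounds for the four combined sets
  have hcE : s1.card + s3.card ≤ 2 ^ (r - 1) := by
    have hsub : s1 ∪ s3 = Finset.univ.filter (fun i => Even (g i)) := by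
      rw [hs1, hs3, ← Finset.filter_or]
      apply Finset.filter_congr
      intro i _
      tauto
    have := hkey (s1 ∪ s3) ?_
    · have hdisj : Disjoint s1 s3 := by
        rw [hs1, hs3, Finset.disjoint_left]
        intro i hi hi'
        simp only [mem_filter] at hi hi'
        exact hi'.2.1 hi.2.1
      rwa [Finset.card_union_of_disjoint hdisj] at this
    · intro i hi j hj
      rw [hsub] at hi hj
      simp only [mem_filter, mem_univ, true_and] at hi hj
      rw [hmod] at hi hj
      omega
  have hcO : s2.card + s4.card ≤ 2 ^ (r - 1) := by
    have hsub : s2 ∪ s4 = Finset.univ.filter (fun i => ¬ Even (g i)) := by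
      rw [hs2, hs4, ← Finset.filter_or]
      apply Finset.filter_congr
      intro i _
      tauto
    have := hkey (s2 ∪ s4) ?_
    · have hdisj : Disjoint s2 s4 := by
        rw [hs2, hs4, Finset.disjoint_left]
        intro i hi hi'
        simp only [mem_filter] at hi hi'
        exact hi'.2.1 hi.2.1
      rwa [Finset.card_union_of_disjoint hdisj] at this
    · intro i hi j hj
      rw [hsub] at hi hj
      simp only [mem_filter, mem_univ, true_and] at hi hj
      rw [hmod'] at hi hj
      omega
  have hcA : s2.card + s3.card ≤ 2 ^ (r - 1) := by
    have hdisj : Disjoint s2 s3 := by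
      rw [hs2, hs3, Finset.disjoint_left]
      intro i hi hi'
      simp only [mem_filter] at hi hi'
      exact hi'.2.1 hi.2.1
    have := hkey (s2 ∪ s3) ?_
    · rwa [Finset.card_union_of_disjoint hdisj] at this
    · intro i hmi j hmj
      simp only [Finset.mem_union, hs2, hs3, mem_filter, mem_univ, true_and] at hmi hmj
      have hi' : (lo ≤ g i ∧ g i ≤ hi) ∧ g i % 2 = 1 ∨
          ¬(lo ≤ g i ∧ g i ≤ hi) ∧ g i % 2 = 0 := by
        rcases hmi with ⟨h1, h2⟩ | ⟨h1, h2⟩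
        · exact Or.inl ⟨h1, (hmod' i).mp h2⟩
        · exact Or.inr ⟨h1, (hmod i).mp h2⟩
      have hj' : (lo ≤ g j ∧ g j ≤ hi) ∧ g j % 2 = 1 ∨
          ¬(lo ≤ g j ∧ g j ≤ hi) ∧ g j % 2 = 0 := by
        rcases hmj with ⟨h1, h2⟩ | ⟨h1, h2⟩
        · exact Or.inl ⟨h1, (hmod' j).mp h2⟩
        · exact Or.inr ⟨h1, (hmod j).mp h2⟩
      exact hgap (g i) (g j) (hlo' i) (hhi' i) (hlo' j) (hhi' j) false
        (by simpa using hi') (by simpa using hj')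
  have hcB : s1.card + s4.card ≤ 2 ^ (r - 1) := by
    have hdisj : Disjoint s1 s4 := by
      rw [hs1, hs4, Finset.disjoint_left]
      intro i hi hi'
      simp only [mem_filter] at hi hi'
      exact hi'.2.1 hi.2.1
    have := hkey (s1 ∪ s4) ?_
    · rwa [Finset.card_union_of_disjoint hdisj] at this
    · intro i hmi j hmj
      simp only [Finset.mem_union, hs1, hs4, mem_filter, mem_univ, true_and] at hmi hmj
      have hi' : (lo ≤ g i ∧ g i ≤ hi) ∧ g i % 2 = 0 ∨
          ¬(lo ≤ g i ∧ g i ≤ hi) ∧ g i % 2 = 1 := by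
        rcases hmi with ⟨h1, h2⟩ | ⟨h1, h2⟩
        · exact Or.inl ⟨h1, (hmod i).mp h2⟩
        · exact Or.inr ⟨h1, (hmod' i).mp h2⟩
      have hj' : (lo ≤ g j ∧ g j ≤ hi) ∧ g j % 2 = 0 ∨
          ¬(lo ≤ g j ∧ g j ≤ hi) ∧ g j % 2 = 1 := by
        rcases hmj with ⟨h1, h2⟩ | ⟨h1, h2⟩
        · exact Or.inl ⟨h1, (hmod j).mp h2⟩
        · exact Or.inr ⟨h1, (hmod' j).mp h2⟩
      exact hgap (g i) (g j) (hlo' i) (hhi' i) (hlo' j) (hhi' j) true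
        (by simpa using hi') (by simpa using hj')
  -- total
  have htot : s1.card + s2.card + s3.card + s4.card = 2 ^ r := by
    have e1 := Finset.card_filter_add_card_filter_not
      (s := (Finset.univ : Finset (Fin (2 ^ r)))) (p := fun i => Even (g i))
    have e2 : (Finset.univ.filter fun i => Even (g i)).card = s1.card + s3.card := by
      have hsub : Finset.univ.filter (fun i => Even (g i)) = s1 ∪ s3 := by
        rw [hs1, hs3, ← Finset.filter_or]
        apply Finset.filter_congr
        intro i _
        tauto
      have hdisj : Disjoint s1 s3 := by
        rw [hs1, hs3, Finset.disjoint_left]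
        intro i hi hi'
        simp only [mem_filter] at hi hi'
        exact hi'.2.1 hi.2.1
      rw [hsub, Finset.card_union_of_disjoint hdisj]
    have e3 : (Finset.univ.filter fun i => ¬ Even (g i)).card = s2.card + s4.card := by
      have hsub : Finset.univ.filter (fun i => ¬ Even (g i)) = s2 ∪ s4 := by
        rw [hs2, hs4, ← Finset.filter_or]
        apply Finset.filter_congr
        intro i _
        tauto
      have hdisj : Disjoint s2 s4 := by
        rw [hs2, hs4, Finset.disjoint_left]
        intro i hi hi'
        simp only [mem_filter] at hi hi'
        exact hi'.2.1 hi.2.1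
      rw [hsub, Finset.card_union_of_disjoint hdisj]
    rw [e2, e3] at e1
    rw [Finset.card_univ, Fintype.card_fin] at e1
    omega
  have hpow : 2 ^ (r - 1) + 2 ^ (r - 1) = 2 ^ r := by
    have h2 : (2:ℕ) ^ ((r - 1) + 1) = 2 ^ (r - 1) * 2 := pow_succ 2 (r - 1)
    have h3 : (r - 1) + 1 = r := by omega
    rw [h3] at h2
    omega
  have hmain : s1.card = s2.card := by omega
  -- rewrite the sum
  have hsum : (∑ c ∈ Finset.Icc lo hi,
      (if Even c then (layerCard cl ν c : ℤ) else -(layerCard cl ν c : ℤ)))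
      = (s1.card : ℤ) - (s2.card : ℤ) := by
    have step1 : ∀ c : ℤ, (if Even c then (layerCard cl ν c : ℤ) else -(layerCard cl ν c : ℤ))
        = ∑ i : Fin (2 ^ r), (if g i = c then (if Even c then (1 : ℤ) else -1) else 0) := by
      intro c
      have hcard : (layerCard cl ν c : ℤ) = ∑ i : Fin (2 ^ r), (if g i = c then (1 : ℤ) else 0) := by
        rw [layerCard, Finset.card_filter]
        push_cast
        rfl
      by_cases hc : Even c
      · simp only [hc, if_true]
        rw [hcard]
      · simp only [hc, if_false]
        rw [hcard, ← Finset.sum_neg_distrib]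
        apply Finset.sum_congr rfl
        intro i _
        by_cases hgi : g i = c <;> simp [hgi]
    rw [Finset.sum_congr rfl (fun c _ => step1 c), Finset.sum_comm]
    have step2 : ∀ i : Fin (2 ^ r),
        (∑ c ∈ Finset.Icc lo hi, if g i = c then (if Even c then (1 : ℤ) else -1) else 0)
        = if lo ≤ g i ∧ g i ≤ hi then (if Even (g i) then (1 : ℤ) else -1) else 0 := by
      intro i
      rw [Finset.sum_ite_eq (Finset.Icc lo hi) (g i) (fun c => if Even c then (1 : ℤ) else -1)]
      simp [Finset.mem_Icc]
    rw [Finset.sum_congr rfl (fun i _ => step2 i)]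
    have step3 : ∀ i : Fin (2 ^ r),
        (if lo ≤ g i ∧ g i ≤ hi then (if Even (g i) then (1 : ℤ) else -1) else 0)
        = (if P i ∧ Even (g i) then (1 : ℤ) else 0) - (if P i ∧ ¬ Even (g i) then (1 : ℤ) else 0) := by
      intro i
      by_cases h1 : lo ≤ g i ∧ g i ≤ hi <;> by_cases h2 : Even (g i) <;>
        simp [hP, h1, h2]
    rw [Finset.sum_congr rfl (fun i _ => step3 i), Finset.sum_sub_distrib]
    congr 1
    · rw [hs1, Finset.card_filter]
      push_cast
      rfl
    · rw [hs2, Finset.card_filter]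
      push_cast
      rfl
  rw [hsum, hmain, sub_self]
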